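/- arXiv:2308.03335 — 2 statements merged into one kernel-verified Lean document; each statement's English description precedes it below -/
import Mathlib

section
/- Let D = (1/(2ℓ+1))·sin(Aα(2ℓ+1)/2)/sin(Aα/2) and ρ_θ = (1/2)[(1+D)|ψ_+⟩⟨ψ_+| + (1−D)|ψ_−⟩⟨ψ_−|] with ψ_± = (|0⟩ ± e^{iAθ}|1⟩)/√2. Then L_θ = iAD(|ψ_+⟩⟨ψ_−| − |ψ_−⟩⟨ψ_+|) satisfies ∂_θ ρ_θ = (ρ_θ L_θ + L_θ ρ_θ)/2, and the SLD Fisher information tr[ρ_θ L_θ²] equals A²D². -/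
/-- `ψ_± = (|0⟩ ± e^{iAθ}|1⟩)/√2`. -/
noncomputable def psiPM (A θ : ℝ) (s : Bool) : Fin 2 → ℂ :=
  ![1 / Real.sqrt 2, (if s then 1 else -1) * Complex.exp (Complex.I * (A : ℂ) * (θ : ℂ)) / Real.sqrt 2]

/-- Dephasing factor `D = (1/(2ℓ+1))·sin(Aα(2ℓ+1)/2)/sin(Aα/2)`. -/
noncomputable def dephD (A α : ℝ) (ℓ : ℕ) : ℝ :=
  (1 / (2 * (ℓ : ℝ) + 1)) * (Real.sin (A * α * (2 * (ℓ : ℝ) + 1) / 2) / Real.sin (A * α / 2))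

/-- The effective single-atom state of a `(2ℓ+1)`-layer clock:
`ρ_θ = (1/2)[(1+D)|ψ_+⟩⟨ψ_+| + (1−D)|ψ_−⟩⟨ψ_−|]`. -/
noncomputable def rhoMix (A α : ℝ) (ℓ : ℕ) (θ : ℝ) : Matrix (Fin 2) (Fin 2) ℂ :=
  (((1 + dephD A α ℓ) / 2 : ℝ) : ℂ) •
      Matrix.vecMulVec (psiPM A θ true) (fun j => star (psiPM A θ true j)) +
    (((1 - dephD A α ℓ) / 2 : ℝ) : ℂ) •
      Matrix.vecMulVec (psiPM A θ false) (fun j => star (psiPM A θ false j))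

/-- The SLD `L_θ = iAD(|ψ_+⟩⟨ψ_−| − |ψ_−⟩⟨ψ_+|)`. -/
noncomputable def sldMix (A α : ℝ) (ℓ : ℕ) (θ : ℝ) : Matrix (Fin 2) (Fin 2) ℂ :=
  (Complex.I * (A : ℂ) * ((dephD A α ℓ : ℝ) : ℂ)) •
    (Matrix.vecMulVec (psiPM A θ true) (fun j => star (psiPM A θ false j)) -
      Matrix.vecMulVec (psiPM A θ false) (fun j => star (psiPM A θ true j)))

lemma hs2 : ((Real.sqrt 2 : ℝ) : ℂ) * ((Real.sqrt 2 : ℝ) : ℂ) = 2 := by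
  rw [← Complex.ofReal_mul, Real.mul_self_sqrt (by norm_num)]; norm_num

lemma hs2sq : ((Real.sqrt 2 : ℝ) : ℂ) ^ 2 = 2 := by
  rw [sq, hs2]

lemma rho_eq (A α : ℝ) (ℓ : ℕ) (θ : ℝ) :
    rhoMix A α ℓ θ = !![1/2, ((dephD A α ℓ : ℝ) : ℂ)/2 * Complex.exp (-(Complex.I * A * θ));
      ((dephD A α ℓ : ℝ) : ℂ)/2 * Complex.exp (Complex.I * A * θ), 1/2] := by
  ext i j
  fin_cases i <;> fin_cases j <;>
    · simp only [rhoMix, Matrix.add_apply, Matrix.smul_apply, Matrix.vecMulVec_apply]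
      simp [psiPM, Matrix.vecMulVec_apply, Complex.star_def,
        ← Complex.exp_conj, map_mul, Complex.conj_I, Complex.conj_ofReal]
      field_simp [hs2]
      first
        | ring1
        | (rw [← Complex.exp_add]; norm_num [hs2sq])
        | (rw [hs2sq]; ring1)

lemma sld_eq (A α : ℝ) (ℓ : ℕ) (θ : ℝ) :
    sldMix A α ℓ θ = !![0, -(Complex.I * A * ((dephD A α ℓ : ℝ) : ℂ)) * Complex.exp (-(Complex.I * A * θ));
      Complex.I * A * ((dephD A α ℓ : ℝ) : ℂ) * Complex.exp (Complex.I * A * θ), 0] := by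
  ext i j
  fin_cases i <;> fin_cases j <;>
    (simp only [sldMix, Matrix.sub_apply, Matrix.smul_apply, Matrix.vecMulVec_apply]
     simp [psiPM, Matrix.vecMulVec_apply, Complex.star_def,
      ← Complex.exp_conj, map_mul, Complex.conj_I, Complex.conj_ofReal])
  all_goals field_simp [hs2]
  all_goals first
    | ring1
    | (rw [← Complex.exp_add]; norm_num)
    | (rw [hs2sq]; ring1)
    | (rw [hs2sq]; norm_num)

lemma sum_eq (A α : ℝ) (ℓ : ℕ) (θ : ℝ) :
    rhoMix A α ℓ θ * sldMix A α ℓ θ + sldMix A α ℓ θ * rhoMix A α ℓ θ =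
      !![0, -(Complex.I * A * ((dephD A α ℓ : ℝ) : ℂ)) * Complex.exp (-(Complex.I * A * θ));
        Complex.I * A * ((dephD A α ℓ : ℝ) : ℂ) * Complex.exp (Complex.I * A * θ), 0] := by
  rw [rho_eq, sld_eq]
  ext i j
  fin_cases i <;> fin_cases j <;>
    simp [Matrix.mul_apply, Fin.sum_univ_two, Complex.exp_neg]
  all_goals field_simp [Complex.exp_ne_zero]
  all_goals ring1

lemma hasDerivAt_cexp_real (c : ℂ) (θ : ℝ) :
    HasDerivAt (fun t : ℝ => Complex.exp (c * t)) (c * Complex.exp (c * θ)) θ := by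
  have h0 : HasDerivAt (fun z : ℂ => c * z) c (θ : ℂ) := by
    simpa using (hasDerivAt_id (θ : ℂ)).const_mul c
  have h1 := (Complex.hasDerivAt_exp (c * (θ : ℂ))).comp (θ : ℂ) h0
  simpa [Function.comp, mul_comm] using h1.comp_ofReal

lemma dexp_pos (A θ : ℝ) :
    HasDerivAt (fun t : ℝ => Complex.exp (Complex.I * A * t))
      (Complex.I * A * Complex.exp (Complex.I * A * θ)) θ :=
  hasDerivAt_cexp_real (Complex.I * A) θ

lemma dexp_neg (A θ : ℝ) :
    HasDerivAt (fun t : ℝ => Complex.exp (-(Complex.I * A * t)))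
      (-(Complex.I * A) * Complex.exp (-(Complex.I * A * θ))) θ := by
  simpa [neg_mul] using hasDerivAt_cexp_real (-(Complex.I * A)) θ

/-- `L_θ` satisfies the SLD equation `∂_θ ρ_θ = (ρ_θ L_θ + L_θ ρ_θ)/2` (entrywise),
and the SLD Fisher information `tr[ρ_θ L_θ²]` equals `A²D²`. -/
theorem sld_equation_and_fisher_mix (A α : ℝ) (ℓ : ℕ) (h : Real.sin (A * α / 2) ≠ 0)
    (θ : ℝ) :
    (∀ i j : Fin 2,
        HasDerivAt (fun t : ℝ => rhoMix A α ℓ t i j)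
          ((1/2 : ℂ) *
            ((rhoMix A α ℓ θ * sldMix A α ℓ θ + sldMix A α ℓ θ * rhoMix A α ℓ θ) i j)) θ) ∧
      (rhoMix A α ℓ θ * (sldMix A α ℓ θ * sldMix A α ℓ θ)).trace =
        ((A : ℂ))^2 * ((dephD A α ℓ : ℝ) : ℂ)^2 := by
  constructor
  · intro i j
    rw [sum_eq]
    have hfun : ∀ t : ℝ, rhoMix A α ℓ t i j =
        (!![1/2, ((dephD A α ℓ : ℝ) : ℂ)/2 * Complex.exp (-(Complex.I * A * t));
          ((dephD A α ℓ : ℝ) : ℂ)/2 * Complex.exp (Complex.I * A * t), 1/2] :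
            Matrix (Fin 2) (Fin 2) ℂ) i j := fun t => by rw [rho_eq]
    simp only [hfun]
    fin_cases i <;> fin_cases j
    · simpa using hasDerivAt_const θ ((1:ℂ)/2)
    · simp only [Matrix.cons_val', Matrix.cons_val_zero, Matrix.cons_val_one, Matrix.head_cons,
        Matrix.empty_val', Matrix.cons_val_fin_one, Matrix.head_fin_const, Matrix.of_apply,
        Fin.mk_zero, Fin.mk_one]
      have := (dexp_neg A θ).const_mul (((dephD A α ℓ : ℝ) : ℂ)/2)
      convert this using 1
      · rfl
      ring
    · simp only [Matrix.cons_val', Matrix.cons_val_zero, Matrix.cons_val_one, Matrix.head_cons,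
        Matrix.empty_val', Matrix.cons_val_fin_one, Matrix.head_fin_const, Matrix.of_apply,
        Fin.mk_zero, Fin.mk_one]
      have := (dexp_pos A θ).const_mul (((dephD A α ℓ : ℝ) : ℂ)/2)
      convert this using 1
      · rfl
      ring
    · simpa using hasDerivAt_const θ ((1:ℂ)/2)
  · rw [rho_eq, sld_eq]
    simp [Matrix.trace_fin_two, Matrix.mul_apply, Fin.sum_univ_two, Complex.exp_neg]
    field_simp [Complex.exp_ne_zero]
    ring_nf
    simp [Complex.I_sq]
end

section
/- For the family of densities f_θ(φ) = (1/(2π))(1 + cos(Aθ − φ)) on [0,2π), the classical Fisher information I(θ) = ∫₀^{2π} (∂_θ ln f_θ(φ))² f_θ(φ) dφ equals A². -/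
open MeasureTheory intervalIntegral Real

lemma bad_set_countable (c : ℝ) : Set.Countable {φ : ℝ | 1 + Real.cos (c - φ) = 0} := by
  have : {φ : ℝ | 1 + Real.cos (c - φ) = 0} ⊆ Set.range (fun n : ℤ => c + Real.pi - n * (2 * Real.pi)) := by
    intro φ hφ
    have h : Real.cos (c - φ + Real.pi) = 1 := by
      rw [Real.cos_add_pi]
      simp only [Set.mem_setOf_eq] at hφ
      linarith
    obtain ⟨n, hn⟩ := Real.cos_eq_one_iff _ |>.mp h
    exact ⟨n, by push_cast at hn ⊢; linarith⟩
  exact Set.Countable.mono this (Set.countable_range _)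

/-- The classical Fisher information of the family `f_θ(φ) = (1/(2π))(1 + cos(Aθ − φ))`,
`I(θ) = ∫₀^{2π} (A sin(Aθ−φ))²/(1+cos(Aθ−φ)) dφ/(2π)` (integrand extended by `0` where
`f_θ` vanishes, as is the convention for division by zero), equals `A²`. -/
theorem covariant_fisher_info (A θ : ℝ) :
    (∫ φ in (0 : ℝ)..(2 * Real.pi),
        (A * Real.sin (A * θ - φ))^2 / (1 + Real.cos (A * θ - φ)) * (1 / (2 * Real.pi)))
      = A^2 := by
  have hae : ∀ᵐ φ : ℝ, φ ∈ Set.uIoc (0:ℝ) (2 * Real.pi) →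
      (A * Real.sin (A * θ - φ))^2 / (1 + Real.cos (A * θ - φ)) * (1 / (2 * Real.pi))
        = A^2 * (1 - Real.cos (A * θ - φ)) * (1 / (2 * Real.pi)) := by
    have hz : (volume : Measure ℝ) {φ : ℝ | 1 + Real.cos (A * θ - φ) = 0} = 0 :=
      (bad_set_countable (A * θ)).measure_zero _
    filter_upwards [measure_eq_zero_iff_ae_notMem.mp hz] with φ hφ _
    have h : 1 + Real.cos (A * θ - φ) ≠ 0 := hφ
    have key : (A * Real.sin (A * θ - φ))^2 / (1 + Real.cos (A * θ - φ))
        = A^2 * (1 - Real.cos (A * θ - φ)) := by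
      rw [div_eq_iff h]
      nlinarith [Real.sin_sq (A * θ - φ)]
    rw [key]
  rw [intervalIntegral.integral_congr_ae hae]
  have h1 : (∫ φ in (0:ℝ)..(2 * Real.pi), Real.cos (A * θ - φ)) = 0 := by
    rw [intervalIntegral.integral_comp_sub_left (fun x => Real.cos x) (A * θ)]
    rw [integral_cos, Real.sin_sub_two_pi]
    ring
  have h2 : (∫ φ in (0:ℝ)..(2 * Real.pi),
      A^2 * (1 - Real.cos (A * θ - φ)) * (1 / (2 * Real.pi)))
      = (A^2 * (1 / (2 * Real.pi))) * ∫ φ in (0:ℝ)..(2 * Real.pi), (1 - Real.cos (A * θ - φ)) := by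
    rw [← intervalIntegral.integral_const_mul]
    congr 1; ext φ; ring
  rw [h2]
  have hcos : IntervalIntegrable (fun φ => Real.cos (A * θ - φ)) volume 0 (2 * Real.pi) :=
    (Real.continuous_cos.comp (continuous_const.sub continuous_id)).intervalIntegrable _ _
  rw [intervalIntegral.integral_sub (intervalIntegrable_const) hcos, h1,
    intervalIntegral.integral_const]
  have hπ : Real.pi ≠ 0 := Real.pi_ne_zero
  field_simp
  simp only [sub_zero, smul_eq_mul, mul_one]
  ring
end
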